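/- In the Mallows model with reference vote V : c_1 > c_2 > … > c_m and the 'unfolded' axis A : … c_6 c_4 c_2 c_1 c_3 c_5 …, every vote at Kendall tau distance 1 from V is single-peaked with respect to A (there are exactly m−1 such votes), and at least (m−2)(m−3)/2 votes at Kendall tau distance 2 from V are single-peaked with respect to A. Consequently, the probability that a single Mallows-sampled vote is single-peaked with respect to A is at least (1 + φ(m−1) + φ²(m−2)(m−3)/2)/Z, and the probability that an (n,m)-election of n independent Mallows votes is single-peaked is at least ((1 + φ(m−1) + φ²(m−2)(m−3)/2)/Z)^n. -/

import Mathlib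

open scoped Classical

/-- Single-peakedness of a vote `W` (rank function, smaller = more preferred) with
respect to an axis given by a position function `p` on the candidates. -/
def SPpos {m : ℕ} (W : Equiv.Perm (Fin m)) (p : Fin m → ℕ) : Prop :=
  ∀ c₁ c₂ c₃ : Fin m, ¬(p c₁ < p c₂ ∧ p c₂ < p c₃ ∧ W c₁ < W c₂ ∧ W c₃ < W c₂)

/-- An election is single-peaked if some axis (a linear order on the candidates,
given by its position function) works for all votes. -/
def SPElection {n m : ℕ} (P : Fin n → Equiv.Perm (Fin m)) : Prop :=
  ∃ A : Equiv.Perm (Fin m), ∀ i, SPpos (P i) (fun c => (A c : ℕ))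

/-- Kendall tau distance from `W` to the identity reference vote
`V : c_1 > c_2 > … > c_m` (candidate `c_{k+1}` is index `k`, `V` ranks it `k`-th). -/
def kt {m : ℕ} (W : Equiv.Perm (Fin m)) : ℕ :=
  (Finset.univ.filter fun p : Fin m × Fin m => p.1 < p.2 ∧ W p.2 < W p.1).card

/-- The "unfolded" axis `A : … c_6 c_4 c_2 c_1 c_3 c_5 …`: position of candidate
`c_{k+1}` (index `k`) on the axis, even-indexed candidates to the left of `c_1`,
odd-indexed to the right. -/
def axisA (m : ℕ) : Fin m → ℕ := fun k =>
  if k.val % 2 = 1 then m / 2 - (k.val + 1) / 2 else m / 2 + k.val / 2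

/-- Mallows normalization constant `Z = ∏_{j=1}^m (1 + φ + … + φ^{j−1})`. -/
noncomputable def Zm (m : ℕ) (φ : ℝ) : ℝ :=
  ∏ j ∈ Finset.range m, ∑ i ∈ Finset.range (j + 1), φ ^ i

def aswap (m a : ℕ) : Equiv.Perm (Fin m) :=
  if h : a + 1 < m then Equiv.swap ⟨a, by omega⟩ ⟨a + 1, h⟩ else 1

lemma aswap_val {m a : ℕ} (h : a + 1 < m) (x : Fin m) :
    ((aswap m a) x : ℕ) = if (x : ℕ) = a then a + 1 else if (x : ℕ) = a + 1 then a else (x : ℕ) := by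
  unfold aswap
  rw [dif_pos h]
  by_cases hx : x = (⟨a, by omega⟩ : Fin m)
  · subst hx
    rw [Equiv.swap_apply_left]
    simp
  · by_cases hx' : x = (⟨a + 1, h⟩ : Fin m)
    · subst hx'
      rw [Equiv.swap_apply_right]
      simp [show ¬(a + 1 = a) by omega]
    · rw [Equiv.swap_apply_of_ne_of_ne hx hx']
      have h1 : ¬(x : ℕ) = a := fun e => hx (Fin.ext e)
      have h2 : ¬(x : ℕ) = a + 1 := fun e => hx' (Fin.ext e)
      simp [h1, h2]

lemma kt_inv {m : ℕ} (W : Equiv.Perm (Fin m)) : kt W⁻¹ = kt W := by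
  unfold kt
  apply Finset.card_bij' (fun p _ => (W⁻¹ p.2, W⁻¹ p.1)) (fun q _ => (W q.2, W q.1))
  · intro p hp
    simp only [Finset.mem_filter, Finset.mem_univ, true_and] at hp ⊢
    refine ⟨hp.2, ?_⟩
    simpa using hp.1
  · intro q hq
    simp only [Finset.mem_filter, Finset.mem_univ, true_and] at hq ⊢
    refine ⟨hq.2, ?_⟩
    simpa using hq.1
  · intro p hp; simp
  · intro q hq; simp

lemma two_le_kt {m : ℕ} (W : Equiv.Perm (Fin m)) (j : Fin m)
    (h : (j : ℕ) + 2 ≤ (W j : ℕ)) : 2 ≤ kt W := by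
  have hm0 : 0 < m := j.pos
  set c : ℕ := (W j : ℕ) with hc
  have hcm : c < m := (W j).isLt
  set B : Finset (Fin m) := Finset.univ.filter (fun x : Fin m => (W x : ℕ) < c) with hB
  have hcB : c ≤ B.card := by
    have hkey := Finset.card_le_card_of_injOn
      (f := fun v : ℕ => W.symm (if hv : v < m then ⟨v, hv⟩ else j))
      (s := Finset.range c) (t := B) ?_ ?_
    · simpa using hkey
    · intro v hv
      have hvc : v < c := Finset.mem_range.mp hv
      have hvm : v < m := by omega
      simp only [hB, Finset.mem_filter, Finset.mem_univ, true_and, dif_pos hvm,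
        Equiv.apply_symm_apply]
      simpa using hvc
    · intro v hv w hw he
      have hvm : v < m := by have := Finset.mem_range.mp (Finset.mem_coe.mp hv); omega
      have hwm : w < m := by have := Finset.mem_range.mp (Finset.mem_coe.mp hw); omega
      simp only [dif_pos hvm, dif_pos hwm] at he
      have := W.symm.injective he
      simpa using congrArg Fin.val this
  have hD : (B.filter (fun x : Fin m => ¬ (j : ℕ) < (x : ℕ))).card ≤ (j : ℕ) := by
    have hsub : B.filter (fun x : Fin m => ¬ (j : ℕ) < (x : ℕ)) ⊆
        Finset.univ.filter (fun x : Fin m => (x : ℕ) < (j : ℕ)) := by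
      intro x hx
      simp only [hB, Finset.mem_filter, Finset.mem_univ, true_and, not_lt] at hx
      simp only [Finset.mem_filter, Finset.mem_univ, true_and]
      have hne : x ≠ j := by
        rintro rfl
        omega
      have : (x : ℕ) ≠ (j : ℕ) := fun e => hne (Fin.ext e)
      omega
    calc (B.filter (fun x : Fin m => ¬ (j : ℕ) < (x : ℕ))).card
        ≤ (Finset.univ.filter (fun x : Fin m => (x : ℕ) < (j : ℕ))).card :=
          Finset.card_le_card hsub
      _ ≤ (j : ℕ) := by
          have := Finset.card_le_card_of_injOn (f := fun x : Fin m => (x : ℕ))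
            (s := Finset.univ.filter (fun x : Fin m => (x : ℕ) < (j : ℕ)))
            (t := Finset.range (j : ℕ)) ?_ ?_
          · simpa using this
          · intro x hx
            simp only [Finset.mem_coe, Finset.mem_filter, Finset.mem_univ, true_and] at hx
            simpa using hx
          · intro x _ y _ he
            exact Fin.ext he
  have hsplit := Finset.card_filter_add_card_filter_not
    (s := B) (p := fun x : Fin m => (j : ℕ) < (x : ℕ))
  set A : Finset (Fin m) := B.filter (fun x : Fin m => (j : ℕ) < (x : ℕ)) with hA
  have hA2 : 1 < A.card := by omega
  obtain ⟨x, hx, y, hy, hxy⟩ := Finset.one_lt_card.mp hA2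
  have hmem : ∀ z ∈ A, (j, z) ∈ Finset.univ.filter
      (fun p : Fin m × Fin m => p.1 < p.2 ∧ W p.2 < W p.1) := by
    intro z hz
    simp only [hA, hB, Finset.mem_filter, Finset.mem_univ, true_and] at hz ⊢
    exact ⟨hz.2, hz.1⟩
  have hsub2 : ({(j, x), (j, y)} : Finset (Fin m × Fin m)) ⊆
      Finset.univ.filter (fun p : Fin m × Fin m => p.1 < p.2 ∧ W p.2 < W p.1) := by
    intro p hp
    simp only [Finset.mem_insert, Finset.mem_singleton] at hp
    rcases hp with rfl | rfl
    · exact hmem x hx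
    · exact hmem y hy
  have hc2 : ({(j, x), (j, y)} : Finset (Fin m × Fin m)).card = 2 := by
    rw [Finset.card_insert_of_notMem (by simp [hxy]), Finset.card_singleton]
  have := Finset.card_le_card hsub2
  unfold kt
  omega

lemma near_of_kt {m : ℕ} (W : Equiv.Perm (Fin m)) (h : kt W < 2) (j : Fin m) :
    (j : ℕ) ≤ (W j : ℕ) + 1 ∧ (W j : ℕ) ≤ (j : ℕ) + 1 := by
  constructor
  · by_contra hcon
    push_neg at hcon
    have h2 : (W j : ℕ) + 2 ≤ ((W⁻¹ (W j)) : ℕ) := by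
      rw [show W⁻¹ (W j) = j from W.symm_apply_apply j]
      omega
    have := two_le_kt W⁻¹ (W j) h2
    rw [kt_inv] at this
    omega
  · by_contra hcon
    push_neg at hcon
    have := two_le_kt W j (by omega)
    omega

lemma le_apply_of_strictMono {m : ℕ} (f : Fin m → Fin m) (hf : StrictMono f) :
    ∀ x : Fin m, (x : ℕ) ≤ (f x : ℕ) := by
  have H : ∀ k : ℕ, ∀ x : Fin m, (x : ℕ) = k → k ≤ (f x : ℕ) := by
    intro k
    induction k with
    | zero => intro x _; exact Nat.zero_le _
    | succ p ih =>
      intro x hx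
      have hpm : p < m := by have := x.isLt; omega
      have h1 : p ≤ (f ⟨p, hpm⟩ : ℕ) := ih ⟨p, hpm⟩ rfl
      have h2 : f ⟨p, hpm⟩ < f x := hf (by rw [Fin.lt_def]; simp; omega)
      have h3 : (f ⟨p, hpm⟩ : ℕ) < (f x : ℕ) := h2
      omega
  exact fun x => H (x : ℕ) x rfl

lemma perm_eq_one_of_strictMono {m : ℕ} (f : Equiv.Perm (Fin m))
    (hf : StrictMono (⇑f : Fin m → Fin m)) : f = 1 := by
  have hinv : StrictMono (⇑(f⁻¹) : Fin m → Fin m) := by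
    intro x y hxy
    rcases lt_trichotomy (f⁻¹ x) (f⁻¹ y) with hh | hh | hh
    · exact hh
    · exfalso
      have : x = y := by
        have := congrArg f hh
        simpa using this
      subst this
      exact lt_irrefl _ hxy
    · exfalso
      have := hf hh
      simp only [show ∀ x, f (f⁻¹ x) = x from f.apply_symm_apply] at this
      exact absurd hxy (not_lt_of_gt this)
  apply Equiv.ext
  intro x
  have h1 := le_apply_of_strictMono _ hf x
  have h2 := le_apply_of_strictMono _ hinv (f x)
  simp only [show ∀ x, f⁻¹ (f x) = x from f.symm_apply_apply] at h2
  have : f x = x := Fin.ext (by omega)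
  simpa using this

lemma kt_aswap {m a : ℕ} (h : a + 1 < m) : kt (aswap m a) = 1 := by
  unfold kt
  rw [Finset.card_eq_one]
  refine ⟨((⟨a, by omega⟩ : Fin m), (⟨a + 1, h⟩ : Fin m)), ?_⟩
  ext p
  simp only [Finset.mem_filter, Finset.mem_univ, true_and, Finset.mem_singleton]
  constructor
  · rintro ⟨h1, h2⟩
    have hv1 : (p.1 : ℕ) < (p.2 : ℕ) := h1
    have hv2 : ((aswap m a) p.2 : ℕ) < ((aswap m a) p.1 : ℕ) := h2
    rw [aswap_val h, aswap_val h] at hv2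
    have hkey : (p.1 : ℕ) = a ∧ (p.2 : ℕ) = a + 1 := by
      split_ifs at hv2 <;> omega
    exact Prod.ext_iff.mpr ⟨Fin.ext (by simpa using hkey.1), Fin.ext (by simpa using hkey.2)⟩
  · rintro rfl
    refine ⟨by simp [Fin.lt_def], ?_⟩
    have : ((aswap m a) ⟨a + 1, h⟩ : ℕ) < ((aswap m a) ⟨a, by omega⟩ : ℕ) := by
      rw [aswap_val h, aswap_val h]
      simp [show ¬(a + 1 = a) by omega]
    exact this

lemma kt_one_char {m : ℕ} (W : Equiv.Perm (Fin m)) (h : kt W = 1) :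
    ∃ a : ℕ, a + 1 < m ∧ W = aswap m a := by
  have h1 : (Finset.univ.filter fun p : Fin m × Fin m => p.1 < p.2 ∧ W p.2 < W p.1).card = 1 := h
  obtain ⟨p, hp⟩ := Finset.card_eq_one.mp h1
  have hpmem : p ∈ Finset.univ.filter (fun p : Fin m × Fin m => p.1 < p.2 ∧ W p.2 < W p.1) := by
    rw [hp]; exact Finset.mem_singleton_self p
  rw [Finset.mem_filter] at hpmem
  obtain ⟨-, hlt, hWlt⟩ := hpmem
  have near := near_of_kt W (by omega)
  obtain ⟨n1a, n1b⟩ := near p.1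
  obtain ⟨n2a, n2b⟩ := near p.2
  have hv : (p.1 : ℕ) < (p.2 : ℕ) := hlt
  have hWv : (W p.2 : ℕ) < (W p.1 : ℕ) := hWlt
  set a : ℕ := (p.1 : ℕ) with ha
  have hp2 : (p.2 : ℕ) = a + 1 := by omega
  have ham : a + 1 < m := by have := p.2.isLt; omega
  refine ⟨a, ham, ?_⟩
  have hmono : ∀ u v : Fin m, (u : ℕ) < (v : ℕ) → ¬((u : ℕ) = a ∧ (v : ℕ) = a + 1) →
      (W u : ℕ) < (W v : ℕ) := by
    intro u v huv hne
    rcases Nat.lt_trichotomy (W u : ℕ) (W v : ℕ) with hh | hh | hh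
    · exact hh
    · exfalso
      have huv' : u = v := W.injective (Fin.ext hh)
      have := congrArg Fin.val huv'
      omega
    · exfalso
      have hmem : (u, v) ∈ Finset.univ.filter
          (fun p : Fin m × Fin m => p.1 < p.2 ∧ W p.2 < W p.1) := by
        rw [Finset.mem_filter]
        refine ⟨Finset.mem_univ _, ?_, ?_⟩
        · exact huv
        · exact hh
      rw [hp, Finset.mem_singleton] at hmem
      have e1 := congrArg (fun q : Fin m × Fin m => (q.1 : ℕ)) hmem
      have e2 := congrArg (fun q : Fin m × Fin m => (q.2 : ℕ)) hmem
      simp only at e1 e2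
      omega
  have hkey : StrictMono (⇑(W * aswap m a) : Fin m → Fin m) := by
    intro x y hxy
    have hxyv : (x : ℕ) < (y : ℕ) := hxy
    show W ((aswap m a) x) < W ((aswap m a) y)
    by_cases hc : (x : ℕ) = a ∧ (y : ℕ) = a + 1
    · have hsx : (aswap m a) x = p.2 := by
        apply Fin.ext
        rw [aswap_val ham]
        split_ifs <;> omega
      have hsy : (aswap m a) y = p.1 := by
        apply Fin.ext
        rw [aswap_val ham]
        split_ifs <;> omega
      rw [hsx, hsy]
      exact hWlt
    · have : (W ((aswap m a) x) : ℕ) < (W ((aswap m a) y) : ℕ) := by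
        apply hmono
        · rw [aswap_val ham, aswap_val ham]
          split_ifs <;> omega
        · rw [aswap_val ham, aswap_val ham]
          split_ifs <;> omega
      exact this
  have hone : W * aswap m a = 1 := perm_eq_one_of_strictMono _ hkey
  have hWeq : W = (aswap m a)⁻¹ := eq_inv_of_mul_eq_one_left hone
  rw [hWeq]
  unfold aswap
  rw [dif_pos ham]
  exact Equiv.swap_inv _ _

def dswap (m i j : ℕ) : Equiv.Perm (Fin m) := aswap m i * aswap m j

lemma dswap_val {m i j : ℕ} (hij : i + 2 ≤ j) (hj : j + 1 < m) (x : Fin m) :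
    ((dswap m i j) x : ℕ) = if (x : ℕ) = i then i + 1 else if (x : ℕ) = i + 1 then i
      else if (x : ℕ) = j then j + 1 else if (x : ℕ) = j + 1 then j else (x : ℕ) := by
  have hi : i + 1 < m := by omega
  show ((aswap m i) ((aswap m j) x) : ℕ) = _
  rw [aswap_val hi, aswap_val hj]
  split_ifs <;> omega

lemma kt_dswap {m i j : ℕ} (hij : i + 2 ≤ j) (hj : j + 1 < m) : kt (dswap m i j) = 2 := by
  unfold kt
  have he : (Finset.univ.filter fun p : Fin m × Fin m =>
        p.1 < p.2 ∧ (dswap m i j) p.2 < (dswap m i j) p.1)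
      = {((⟨i, by omega⟩ : Fin m), (⟨i + 1, by omega⟩ : Fin m)),
         ((⟨j, by omega⟩ : Fin m), (⟨j + 1, by omega⟩ : Fin m))} := by
    ext p
    simp only [Finset.mem_filter, Finset.mem_univ, true_and, Finset.mem_insert,
      Finset.mem_singleton]
    constructor
    · rintro ⟨h1, h2⟩
      have hv1 : (p.1 : ℕ) < (p.2 : ℕ) := h1
      have hv2 : ((dswap m i j) p.2 : ℕ) < ((dswap m i j) p.1 : ℕ) := h2
      rw [dswap_val hij hj, dswap_val hij hj] at hv2
      have hkey : ((p.1 : ℕ) = i ∧ (p.2 : ℕ) = i + 1) ∨ ((p.1 : ℕ) = j ∧ (p.2 : ℕ) = j + 1) := by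
        split_ifs at hv2 <;> omega
      rcases hkey with ⟨e1, e2⟩ | ⟨e1, e2⟩
      · left; exact Prod.ext_iff.mpr ⟨Fin.ext (by simpa using e1), Fin.ext (by simpa using e2)⟩
      · right; exact Prod.ext_iff.mpr ⟨Fin.ext (by simpa using e1), Fin.ext (by simpa using e2)⟩
    · rintro (rfl | rfl)
      · refine ⟨by simp [Fin.lt_def], ?_⟩
        have : ((dswap m i j) (⟨i + 1, by omega⟩ : Fin m) : ℕ) <
            ((dswap m i j) (⟨i, by omega⟩ : Fin m) : ℕ) := by
          rw [dswap_val hij hj, dswap_val hij hj]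
          simp only [Fin.val_mk]
          split_ifs <;> omega
        exact this
      · refine ⟨by simp [Fin.lt_def], ?_⟩
        have : ((dswap m i j) (⟨j + 1, by omega⟩ : Fin m) : ℕ) <
            ((dswap m i j) (⟨j, by omega⟩ : Fin m) : ℕ) := by
          rw [dswap_val hij hj, dswap_val hij hj]
          simp only [Fin.val_mk]
          split_ifs <;> omega
        exact this
  rw [he]
  rw [Finset.card_insert_of_notMem, Finset.card_singleton]
  simp only [Finset.mem_singleton, Prod.mk.injEq, Fin.mk.injEq, not_and]
  omega

lemma dswap_inj {m a b a' b' : ℕ} (h1 : a + 2 ≤ b) (h2 : b + 1 < m)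
    (h1' : a' + 2 ≤ b') (h2' : b' + 1 < m)
    (he : dswap m a b = dswap m a' b') : a = a' ∧ b = b' := by
  have E : ∀ x : Fin m, ((dswap m a b) x : ℕ) = ((dswap m a' b') x : ℕ) := fun x => by rw [he]
  have haa : a = a' := by
    rcases Nat.lt_trichotomy a a' with hlt | heq | hgt
    · have hx := E ⟨a, by omega⟩
      rw [dswap_val h1 h2, dswap_val h1' h2'] at hx
      simp only [Fin.val_mk] at hx  -- hoping this name exists
      split_ifs at hx <;> omega
    · exact heq
    · have hx := E ⟨a', by omega⟩
      rw [dswap_val h1 h2, dswap_val h1' h2'] at hx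
      simp only [Fin.val_mk] at hx
      split_ifs at hx <;> omega
  refine ⟨haa, ?_⟩
  rcases Nat.lt_trichotomy b b' with hlt | heq | hgt
  · have hx := E ⟨b, by omega⟩
    rw [dswap_val h1 h2, dswap_val h1' h2'] at hx
    simp only [Fin.val_mk] at hx
    split_ifs at hx <;> omega
  · exact heq
  · have hx := E ⟨b', by omega⟩
    rw [dswap_val h1 h2, dswap_val h1' h2'] at hx
    simp only [Fin.val_mk] at hx
    split_ifs at hx <;> omega
lemma sp_of_near {m : ℕ} (hm : 2 ≤ m) (W : Equiv.Perm (Fin m))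
    (h : ∀ j : Fin m, (j : ℕ) ≤ (W j : ℕ) + 1 ∧ (W j : ℕ) ≤ (j : ℕ) + 1) :
    SPpos W (axisA m) := by
  have haux : ∀ a b : Fin m, (a : ℕ) % 2 = (b : ℕ) % 2 → (a : ℕ) < (b : ℕ) →
      (W a : ℕ) < (W b : ℕ) := by
    intro a b hp hab
    obtain ⟨h1a, h2a⟩ := h a
    obtain ⟨h1b, h2b⟩ := h b
    have hne : (W a : ℕ) ≠ (W b : ℕ) := by
      intro e
      have hab' : a = b := W.injective (Fin.ext e)
      have := congrArg Fin.val hab'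
      omega
    omega
  intro c₁ c₂ c₃ hcon
  obtain ⟨h12, h23, hW1, hW3⟩ := hcon
  have hv1 : (c₁ : ℕ) < m := c₁.isLt
  have hv2 : (c₂ : ℕ) < m := c₂.isLt
  have hv3 : (c₃ : ℕ) < m := c₃.isLt
  have hl1 : (W c₁ : ℕ) < (W c₂ : ℕ) := hW1
  have hl3 : (W c₃ : ℕ) < (W c₂ : ℕ) := hW3
  simp only [axisA] at h12 h23
  split_ifs at h12 h23 <;>
    first
      | omega
      | (have := haux c₂ c₁ (by omega) (by omega); omega)
      | (have := haux c₂ c₃ (by omega) (by omega); omega)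

lemma sp_dswap {m i j : ℕ} (hm : 2 ≤ m) (hij : i + 2 ≤ j) (hj : j + 1 < m) :
    SPpos (dswap m i j) (axisA m) := by
  apply sp_of_near hm
  intro x
  rw [dswap_val hij hj]
  split_ifs <;> omega

lemma sp_one {m : ℕ} (hm : 2 ≤ m) : SPpos (1 : Equiv.Perm (Fin m)) (axisA m) := by
  apply sp_of_near hm
  intro j
  simp only [Equiv.Perm.one_apply]
  omega

lemma kt_one_perm {m : ℕ} : kt (1 : Equiv.Perm (Fin m)) = 0 := by
  unfold kt
  rw [Finset.card_eq_zero, Finset.filter_eq_empty_iff]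
  rintro p -
  rintro ⟨h1, h2⟩
  simp only [Equiv.Perm.one_apply] at h2
  exact absurd h2 h1.asymm


set_option maxHeartbeats 1000000 in
/-- In the Mallows model with reference vote `V : c_1 > … > c_m` and the unfolded
axis `A`: every vote at Kendall tau distance 1 from `V` is single-peaked w.r.t. `A`
(and there are exactly `m−1` such votes); at least `(m−2)(m−3)/2` votes at distance
2 are single-peaked w.r.t. `A`; hence a single Mallows vote is single-peaked w.r.t.
`A` with probability at least `(1 + φ(m−1) + φ²(m−2)(m−3)/2)/Z`, and an election of
`n` independent Mallows votes is single-peaked with probability at least the `n`-th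
power of this bound. -/
theorem mallows_single_peaked_bounds (m n : ℕ) (hm : 2 ≤ m) (hn : 1 ≤ n)
    (φ : ℝ) (hφ0 : 0 < φ) (hφ1 : φ ≤ 1) :
    (∀ W : Equiv.Perm (Fin m), kt W = 1 → SPpos W (axisA m)) ∧
    {W : Equiv.Perm (Fin m) | kt W = 1}.ncard = m - 1 ∧
    (m - 2) * (m - 3) / 2 ≤
      {W : Equiv.Perm (Fin m) | kt W = 2 ∧ SPpos W (axisA m)}.ncard ∧
    (1 + φ * ((m : ℝ) - 1) + φ ^ 2 * (((m : ℝ) - 2) * ((m : ℝ) - 3) / 2)) / Zm m φ ≤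
      (∑ W ∈ Finset.univ.filter fun W : Equiv.Perm (Fin m) => SPpos W (axisA m),
        φ ^ kt W) / Zm m φ ∧
    ((1 + φ * ((m : ℝ) - 1) + φ ^ 2 * (((m : ℝ) - 2) * ((m : ℝ) - 3) / 2)) / Zm m φ) ^ n ≤
      (∑ P ∈ Finset.univ.filter fun P : Fin n → Equiv.Perm (Fin m) => SPElection P,
        ∏ i, φ ^ kt (P i)) / (Zm m φ) ^ n := by
  -- part 1
  have part1 : ∀ W : Equiv.Perm (Fin m), kt W = 1 → SPpos W (axisA m) :=
    fun W h => sp_of_near hm W (fun j => near_of_kt W (by omega) j)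
  -- the axis as a permutation
  have hax_lt : ∀ k : Fin m, axisA m k < m := by
    intro k
    have := k.isLt
    unfold axisA
    split_ifs <;> omega
  have hax_inj : Function.Injective (fun k : Fin m => (⟨axisA m k, hax_lt k⟩ : Fin m)) := by
    intro a b hab
    have h := congrArg Fin.val hab
    simp only [Fin.val_mk] at h
    have ha := a.isLt
    have hb := b.isLt
    apply Fin.ext
    simp only [axisA] at h
    split_ifs at h <;> omega
  have hax_bij : Function.Bijective (fun k : Fin m => (⟨axisA m k, hax_lt k⟩ : Fin m)) :=
    (Fintype.bijective_iff_injective_and_card _).mpr ⟨hax_inj, rfl⟩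
  -- F1 counting
  have hinj1 : Function.Injective (fun a : Fin (m - 1) => aswap m (a : ℕ)) := by
    intro a b hab
    have ha : (a : ℕ) + 1 < m := by have := a.isLt; omega
    have hb : (b : ℕ) + 1 < m := by have := b.isLt; omega
    have h := congrArg (fun W : Equiv.Perm (Fin m) => ((W ⟨(a : ℕ), by omega⟩ : Fin m) : ℕ)) hab
    simp only at h
    rw [aswap_val ha, aswap_val hb] at h
    simp only [Fin.val_mk] at h
    apply Fin.ext
    split_ifs at h <;> omega
  have hF1 : (Finset.univ.filter fun W : Equiv.Perm (Fin m) => kt W = 1)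
      = Finset.univ.image (fun a : Fin (m - 1) => aswap m (a : ℕ)) := by
    ext W
    simp only [Finset.mem_filter, Finset.mem_univ, true_and, Finset.mem_image]
    constructor
    · intro h
      obtain ⟨a, ha, rfl⟩ := kt_one_char W h
      exact ⟨⟨a, by omega⟩, rfl⟩
    · rintro ⟨a, -, rfl⟩
      exact kt_aswap (by have := a.isLt; omega)
  have hF1card : (Finset.univ.filter fun W : Equiv.Perm (Fin m) => kt W = 1).card = m - 1 := by
    rw [hF1, Finset.card_image_of_injective _ hinj1, Finset.card_univ, Fintype.card_fin]
  have part2 : {W : Equiv.Perm (Fin m) | kt W = 1}.ncard = m - 1 := by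
    have hset : {W : Equiv.Perm (Fin m) | kt W = 1}
        = ↑(Finset.univ.filter fun W : Equiv.Perm (Fin m) => kt W = 1) := by
      ext W; simp
    rw [hset, Set.ncard_coe_finset, hF1card]
  -- F2
  set D : Finset ((_ : ℕ) × ℕ) := (Finset.range (m - 2)).sigma (fun k => Finset.range k) with hD
  have hDmem : ∀ q ∈ D, q.2 + 2 ≤ q.1 + 1 ∧ (q.1 + 1) + 1 < m := by
    intro q hq
    simp only [hD, Finset.mem_sigma, Finset.mem_range] at hq
    omega
  have hginj : Set.InjOn (fun q : (_ : ℕ) × ℕ => dswap m q.2 (q.1 + 1)) ↑D := by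
    rintro ⟨k, i⟩ hk ⟨k', i'⟩ hk' he
    obtain ⟨b1, b2⟩ := hDmem _ (Finset.mem_coe.mp hk)
    obtain ⟨b1', b2'⟩ := hDmem _ (Finset.mem_coe.mp hk')
    obtain ⟨e1, e2⟩ := dswap_inj b1 b2 b1' b2' he
    simp only at e1 e2
    have hk1 : k = k' := by omega
    subst hk1
    have hi1 : i = i' := by omega
    subst hi1
    rfl
  have hcardD : D.card = (m - 2) * (m - 3) / 2 := by
    rw [hD, Finset.card_sigma]
    simp only [Finset.card_range]
    have hg := Finset.sum_range_id_mul_two (m - 2)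
    have h2 : m - 2 - 1 = m - 3 := by omega
    rw [h2] at hg
    omega
  have hF2mem : ∀ W ∈ D.image (fun q : (_ : ℕ) × ℕ => dswap m q.2 (q.1 + 1)),
      kt W = 2 ∧ SPpos W (axisA m) := by
    intro W hW
    obtain ⟨q, hq, rfl⟩ := Finset.mem_image.mp hW
    obtain ⟨b1, b2⟩ := hDmem q hq
    exact ⟨kt_dswap b1 b2, sp_dswap hm b1 b2⟩
  have hF2card : (D.image (fun q : (_ : ℕ) × ℕ => dswap m q.2 (q.1 + 1))).card
      = (m - 2) * (m - 3) / 2 := by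
    rw [Finset.card_image_of_injOn hginj, hcardD]
  have part3 : (m - 2) * (m - 3) / 2 ≤
      {W : Equiv.Perm (Fin m) | kt W = 2 ∧ SPpos W (axisA m)}.ncard := by
    rw [← hF2card, ← Set.ncard_coe_finset]
    apply Set.ncard_le_ncard _ (Set.toFinite _)
    intro W hW
    exact hF2mem W (Finset.mem_coe.mp hW)
  -- Z positive
  have hZ : 0 < Zm m φ := by
    unfold Zm
    apply Finset.prod_pos
    intro j _
    apply Finset.sum_pos (fun i _ => pow_pos hφ0 i)
    exact ⟨0, Finset.mem_range.mpr (by omega)⟩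
  -- casts
  have hcast1 : ((m - 1 : ℕ) : ℝ) = (m : ℝ) - 1 := by
    rw [Nat.cast_sub (by omega : 1 ≤ m), Nat.cast_one]
  have hcast2 : (((m - 2) * (m - 3) / 2 : ℕ) : ℝ) = ((m : ℝ) - 2) * ((m : ℝ) - 3) / 2 := by
    rcases Nat.lt_or_ge m 3 with h3 | h3
    · have hm2 : m = 2 := by omega
      subst hm2
      norm_num
    · have heven : 2 ∣ (m - 2) * (m - 3) := by
        have he : (m - 3) * (m - 3 + 1) = (m - 2) * (m - 3) := by
          rw [mul_comm]
          congr 1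
          omega
        rw [← he]
        exact (Nat.even_mul_succ_self (m - 3)).two_dvd
      rw [Nat.cast_div heven (by norm_num : (2 : ℝ) ≠ 0)]
      rw [Nat.cast_mul, Nat.cast_sub (by omega : 2 ≤ m), Nat.cast_sub (by omega : 3 ≤ m)]
      norm_num
  -- the main sum bound
  have hdisj : Disjoint (Finset.univ.filter fun W : Equiv.Perm (Fin m) => kt W = 1)
      (D.image (fun q : (_ : ℕ) × ℕ => dswap m q.2 (q.1 + 1))) := by
    rw [Finset.disjoint_left]
    intro W hW1 hW2
    have e1 := (Finset.mem_filter.mp hW1).2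
    have e2 := (hF2mem W hW2).1
    omega
  have hnm : (1 : Equiv.Perm (Fin m)) ∉
      ((Finset.univ.filter fun W : Equiv.Perm (Fin m) => kt W = 1)
        ∪ D.image (fun q : (_ : ℕ) × ℕ => dswap m q.2 (q.1 + 1))) := by
    intro hmem
    rcases Finset.mem_union.mp hmem with hh | hh
    · have := (Finset.mem_filter.mp hh).2
      rw [kt_one_perm] at this
      omega
    · have := (hF2mem _ hh).1
      rw [kt_one_perm] at this
      omega
  have hsubSP : insert (1 : Equiv.Perm (Fin m))
      ((Finset.univ.filter fun W : Equiv.Perm (Fin m) => kt W = 1)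
        ∪ D.image (fun q : (_ : ℕ) × ℕ => dswap m q.2 (q.1 + 1)))
      ⊆ Finset.univ.filter fun W : Equiv.Perm (Fin m) => SPpos W (axisA m) := by
    intro W hW
    rw [Finset.mem_filter]
    refine ⟨Finset.mem_univ _, ?_⟩
    rcases Finset.mem_insert.mp hW with rfl | hW'
    · exact sp_one hm
    · rcases Finset.mem_union.mp hW' with hh | hh
      · exact part1 W (Finset.mem_filter.mp hh).2
      · exact (hF2mem W hh).2
  have hsum : 1 + φ * ((m : ℝ) - 1) + φ ^ 2 * (((m : ℝ) - 2) * ((m : ℝ) - 3) / 2)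
      ≤ ∑ W ∈ Finset.univ.filter (fun W : Equiv.Perm (Fin m) => SPpos W (axisA m)),
        φ ^ kt W := by
    have hle := Finset.sum_le_sum_of_subset_of_nonneg hsubSP
      (f := fun W => φ ^ kt W) (fun W _ _ => by positivity)
    refine le_trans (le_of_eq ?_) hle
    rw [Finset.sum_insert hnm, Finset.sum_union hdisj, kt_one_perm, pow_zero]
    have s1 : ∑ W ∈ (Finset.univ.filter fun W : Equiv.Perm (Fin m) => kt W = 1),
        φ ^ kt W = ((m - 1 : ℕ) : ℝ) * φ := by
      rw [Finset.sum_congr rfl (fun W hW => by rw [(Finset.mem_filter.mp hW).2, pow_one])]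
      rw [Finset.sum_const, hF1card, nsmul_eq_mul]
    have s2 : ∑ W ∈ D.image (fun q : (_ : ℕ) × ℕ => dswap m q.2 (q.1 + 1)),
        φ ^ kt W = (((m - 2) * (m - 3) / 2 : ℕ) : ℝ) * φ ^ 2 := by
      rw [Finset.sum_congr rfl (fun W hW => by rw [(hF2mem W hW).1])]
      rw [Finset.sum_const, hF2card, nsmul_eq_mul]
    rw [s1, s2, hcast1, hcast2]
    ring
  refine ⟨part1, part2, part3, ?_, ?_⟩
  · -- part 4
    have := mul_le_mul_of_nonneg_right hsum (le_of_lt (inv_pos.mpr hZ))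
    simpa [div_eq_mul_inv] using this
  · -- part 5
    have hLnn : 0 ≤ 1 + φ * ((m : ℝ) - 1) + φ ^ 2 * (((m : ℝ) - 2) * ((m : ℝ) - 3) / 2) := by
      rw [← hcast1, ← hcast2]
      positivity
    have hpi : Fintype.piFinset (fun _ : Fin n =>
          Finset.univ.filter (fun W : Equiv.Perm (Fin m) => SPpos W (axisA m)))
        ⊆ Finset.univ.filter (fun P : Fin n → Equiv.Perm (Fin m) => SPElection P) := by
      intro P hP
      rw [Finset.mem_filter]
      refine ⟨Finset.mem_univ _, Equiv.ofBijective _ hax_bij, fun i => ?_⟩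
      have hi := (Finset.mem_filter.mp (Fintype.mem_piFinset.mp hP i)).2
      exact hi
    have hprodsum : ∑ P ∈ Fintype.piFinset (fun _ : Fin n =>
          Finset.univ.filter (fun W : Equiv.Perm (Fin m) => SPpos W (axisA m))),
        ∏ i, φ ^ kt (P i)
        = (∑ W ∈ Finset.univ.filter (fun W : Equiv.Perm (Fin m) => SPpos W (axisA m)),
            φ ^ kt W) ^ n := by
      have hsp := Finset.sum_pow'
        (Finset.univ.filter (fun W : Equiv.Perm (Fin m) => SPpos W (axisA m)))
        (fun W => φ ^ kt W) n
      exact hsp.symm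
    have hge : (∑ W ∈ Finset.univ.filter (fun W : Equiv.Perm (Fin m) => SPpos W (axisA m)),
          φ ^ kt W) ^ n
        ≤ ∑ P ∈ Finset.univ.filter (fun P : Fin n → Equiv.Perm (Fin m) => SPElection P),
            ∏ i, φ ^ kt (P i) := by
      rw [← hprodsum]
      exact Finset.sum_le_sum_of_subset_of_nonneg hpi
        (fun P _ _ => Finset.prod_nonneg (fun i _ => by positivity))
    have hLn : (1 + φ * ((m : ℝ) - 1) + φ ^ 2 * (((m : ℝ) - 2) * ((m : ℝ) - 3) / 2)) ^ n
        ≤ (∑ W ∈ Finset.univ.filter (fun W : Equiv.Perm (Fin m) => SPpos W (axisA m)),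
            φ ^ kt W) ^ n := pow_le_pow_left₀ hLnn hsum n
    have hfinal : (1 + φ * ((m : ℝ) - 1) + φ ^ 2 * (((m : ℝ) - 2) * ((m : ℝ) - 3) / 2)) ^ n
        ≤ ∑ P ∈ Finset.univ.filter (fun P : Fin n → Equiv.Perm (Fin m) => SPElection P),
            ∏ i, φ ^ kt (P i) := le_trans hLn hge
    rw [div_pow]
    have := mul_le_mul_of_nonneg_right hfinal (le_of_lt (inv_pos.mpr (pow_pos hZ n)))
    simpa [div_eq_mul_inv] using this
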